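/- The univariate skew-t density ST(z; μ, σ², δ, ν) = 2 t(z; μ, σ²+δ², ν) T(z̃; 0, 1, ν+1), with z̃ = ((z−μ)δ/σ)·√((ν+1)/(ν(σ²+δ²)+(z−μ)²)), integrates to 1 over ℝ. -/

import Mathlib

open MeasureTheory Real

/-- Student t PDF with location `μ`, squared scale `s2`, and `ν` degrees of freedom. -/
noncomputable def tPDF (μ s2 ν x : ℝ) : ℝ :=
  Real.Gamma ((ν + 1) / 2) / (Real.sqrt s2 * Real.sqrt (ν * Real.pi) * Real.Gamma (ν / 2)) *
    (1 + (x - μ) ^ 2 / (ν * s2)) ^ (-((ν + 1) / 2))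

/-- CDF of the standard Student t-distribution with `ν` degrees of freedom. -/
noncomputable def tCDF (ν x : ℝ) : ℝ := ∫ t in Set.Iic x, tPDF 0 1 ν t

/-- Univariate skew t PDF `ST(z; μ, σ², δ, ν) = 2 t(z; μ, σ²+δ², ν) T(z̃; 0, 1, ν+1)`
with `z̃ = ((z−μ)δ/σ)·√((ν+1)/(ν(σ²+δ²)+(z−μ)²))`. -/
noncomputable def stPDF (μ σ δ ν z : ℝ) : ℝ :=
  2 * tPDF μ (σ ^ 2 + δ ^ 2) ν z *
    tCDF (ν + 1) ((z - μ) * δ / σ * Real.sqrt ((ν + 1) / (ν * (σ ^ 2 + δ ^ 2) + (z - μ) ^ 2)))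

open Set
open scoped ENNReal

lemma integrableOn_rpow_exp {s : ℝ} (hs : -1 < s) {b : ℝ} (hb : 0 < b) :
    IntegrableOn (fun t : ℝ => t ^ s * Real.exp (-(b * t))) (Ioi 0) := by
  have h := integrableOn_rpow_mul_exp_neg_mul_rpow hs (one_pos : (0:ℝ) < 1) hb
  refine h.congr_fun (fun t ht => ?_) measurableSet_Ioi
  dsimp only
  rw [Real.rpow_one, neg_mul]

lemma aux_gamma_integral {a : ℝ} (ha : 0 < a) {r : ℝ} (hr : 0 < r) :
    ∫ t : ℝ in Ioi 0, t ^ (a - 1) * Real.exp (-(r * t)) = r ^ (-a) * Real.Gamma a := by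
  rw [integral_rpow_mul_exp_neg_mul_Ioi ha hr, one_div, ← Real.rpow_neg_one, ← Real.rpow_mul hr.le]
  norm_num


lemma measurable_oneaddsq (a : ℝ) : Measurable fun x : ℝ => (1 + x ^ 2) ^ (-a) := by
  fun_prop

lemma lintegral_one_add_sq {a : ℝ} (ha : 1/2 < a) :
    ∫⁻ x : ℝ, ENNReal.ofReal ((1 + x ^ 2) ^ (-a)) =
      ENNReal.ofReal (Real.sqrt Real.pi * Real.Gamma (a - 1/2)) /
        ENNReal.ofReal (Real.Gamma a) := by
  have ha0 : 0 < a := by linarith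
  have hΓa : 0 < Real.Gamma a := Real.Gamma_pos_of_pos ha0
  set F : ℝ → ℝ → ℝ≥0∞ :=
    fun x t => ENNReal.ofReal (t ^ (a - 1) * Real.exp (-((1 + x ^ 2) * t))) with hF
  have key1 : ∀ x : ℝ, ENNReal.ofReal ((1 + x ^ 2) ^ (-a)) * ENNReal.ofReal (Real.Gamma a)
      = ∫⁻ t in Ioi 0, F x t := by
    intro x
    have hr : 0 < 1 + x ^ 2 := by positivity
    rw [← ENNReal.ofReal_mul (by positivity), ← aux_gamma_integral ha0 hr,
      MeasureTheory.ofReal_integral_eq_lintegral_ofReal (integrableOn_rpow_exp (by linarith) hr)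
        (Filter.eventually_of_mem (self_mem_ae_restrict measurableSet_Ioi)
          (fun t ht => mul_nonneg (Real.rpow_nonneg (le_of_lt ht) _) (Real.exp_pos _).le))]
  have hmeasF : Measurable (Function.uncurry F) := by
    apply Measurable.ennreal_ofReal
    fun_prop
  have key2 : ∀ t ∈ Ioi (0:ℝ), (∫⁻ x : ℝ, F x t)
      = ENNReal.ofReal (Real.sqrt Real.pi * (t ^ ((a - 1/2) - 1) * Real.exp (-(1 * t)))) := by
    intro t ht
    have hfun : ∀ x : ℝ, t ^ (a - 1) * Real.exp (-((1 + x ^ 2) * t))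
        = (t ^ (a - 1) * Real.exp (-t)) * Real.exp (-(t * x ^ 2)) := by
      intro x
      rw [mul_assoc, ← Real.exp_add]
      ring_nf
    have hint : Integrable fun x : ℝ => (t ^ (a - 1) * Real.exp (-t)) * Real.exp (-(t * x ^ 2)) := by
      have := integrable_exp_neg_mul_sq ht
      simp only [neg_mul] at this ⊢
      exact this.const_mul _
    simp only [hF, hfun]
    rw [← MeasureTheory.ofReal_integral_eq_lintegral_ofReal hint
      (Filter.Eventually.of_forall (fun x => mul_nonneg (mul_nonneg (Real.rpow_nonneg (le_of_lt ht) _) (Real.exp_pos _).le) (Real.exp_pos _).le))]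
    rw [integral_const_mul]
    have : ∫ x : ℝ, Real.exp (-(t * x ^ 2)) = Real.sqrt (Real.pi / t) := by
      simpa [neg_mul] using integral_gaussian t
    rw [this]
    congr 1
    have ht' : (0:ℝ) < t := ht
    have e1 : t ^ (a - 1/2 - 1) = t ^ (a - 1) / t ^ ((1:ℝ)/2) := by
      rw [show a - 1/2 - 1 = (a - 1) - (1:ℝ)/2 by ring, Real.rpow_sub ht']
    rw [Real.sqrt_div pi_pos.le, Real.sqrt_eq_rpow t, one_mul, e1]
    ring
  have hΓa' : ENNReal.ofReal (Real.Gamma a) ≠ 0 := by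
    simp only [ne_eq, ENNReal.ofReal_eq_zero, not_le]
    exact hΓa
  have main : (∫⁻ x : ℝ, ENNReal.ofReal ((1 + x ^ 2) ^ (-a))) * ENNReal.ofReal (Real.Gamma a)
      = ENNReal.ofReal (Real.sqrt Real.pi * Real.Gamma (a - 1/2)) := by
    rw [← lintegral_mul_const _ ((measurable_oneaddsq a).ennreal_ofReal)]
    simp_rw [key1]
    rw [lintegral_lintegral_swap hmeasF.aemeasurable]
    rw [setLIntegral_congr_fun_ae measurableSet_Ioi (Filter.Eventually.of_forall key2)]
    have hint2 : IntegrableOn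
        (fun t : ℝ => Real.sqrt Real.pi * (t ^ (a - 1/2 - 1) * Real.exp (-(1 * t)))) (Ioi 0) := by
      exact (integrableOn_rpow_exp (by linarith) one_pos).const_mul _
    rw [← MeasureTheory.ofReal_integral_eq_lintegral_ofReal hint2
      (Filter.eventually_of_mem (self_mem_ae_restrict measurableSet_Ioi)
        (fun t ht => mul_nonneg (Real.sqrt_nonneg _)
          (mul_nonneg (Real.rpow_nonneg (le_of_lt ht) _) (Real.exp_pos _).le)))]
    rw [integral_const_mul, aux_gamma_integral (show (0:ℝ) < a - 1/2 by linarith) one_pos,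
      Real.one_rpow, one_mul]
  rw [← main, mul_div_assoc, ENNReal.div_self hΓa' ENNReal.ofReal_ne_top, mul_one]


lemma integrable_one_add_sq {a : ℝ} (ha : 1/2 < a) :
    Integrable (fun x : ℝ => (1 + x ^ 2) ^ (-a)) := by
  have hΓ : (0:ℝ) < Real.Gamma a := Real.Gamma_pos_of_pos (by linarith)
  refine ⟨(measurable_oneaddsq a).aestronglyMeasurable, ?_⟩
  rw [hasFiniteIntegral_iff_ofReal (Filter.Eventually.of_forall fun x => by positivity),
    lintegral_one_add_sq ha]
  exact ENNReal.div_lt_top ENNReal.ofReal_ne_top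
    (by simp only [ne_eq, ENNReal.ofReal_eq_zero, not_le]; exact hΓ)

lemma integral_one_add_sq {a : ℝ} (ha : 1/2 < a) :
    ∫ x : ℝ, (1 + x ^ 2) ^ (-a) = Real.sqrt Real.pi * Real.Gamma (a - 1/2) / Real.Gamma a := by
  have hΓ : (0:ℝ) < Real.Gamma a := Real.Gamma_pos_of_pos (by linarith)
  rw [integral_eq_lintegral_of_nonneg_ae (Filter.Eventually.of_forall fun x => by positivity)
      (measurable_oneaddsq a).aestronglyMeasurable,
    lintegral_one_add_sq ha, ← ENNReal.ofReal_div_of_pos hΓ,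
    ENNReal.toReal_ofReal (div_nonneg (mul_nonneg (Real.sqrt_nonneg _)
      (Real.Gamma_pos_of_pos (show (0:ℝ) < a - 1/2 by linarith)).le) hΓ.le)]

lemma measurable_tPDF (μ s2 ν : ℝ) : Measurable (tPDF μ s2 ν) := by
  unfold tPDF; fun_prop

lemma tPDF_eq (μ s2 ν : ℝ) (hs2 : 0 < s2) (hν : 0 < ν) (x : ℝ) :
    tPDF μ s2 ν x =
      Real.Gamma ((ν + 1) / 2) / (Real.sqrt s2 * Real.sqrt (ν * Real.pi) * Real.Gamma (ν / 2)) *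
        (1 + ((x - μ) / Real.sqrt (ν * s2)) ^ 2) ^ (-((ν + 1) / 2)) := by
  have hc : Real.sqrt (ν * s2) ^ 2 = ν * s2 := Real.sq_sqrt (by positivity)
  rw [tPDF, div_pow, hc]

lemma tPDF_nonneg (μ s2 ν : ℝ) (hs2 : 0 < s2) (hν : 0 < ν) (x : ℝ) : 0 ≤ tPDF μ s2 ν x := by
  have h1 : 0 < Real.Gamma ((ν + 1) / 2) := Real.Gamma_pos_of_pos (by linarith)
  have h2 : 0 ≤ Real.Gamma (ν / 2) := Real.Gamma_nonneg_of_nonneg (by linarith)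
  unfold tPDF
  have hb : (0:ℝ) < 1 + (x - μ) ^ 2 / (ν * s2) := by positivity
  exact mul_nonneg (by positivity) (Real.rpow_nonneg hb.le _)

lemma integrable_tPDF (μ s2 ν : ℝ) (hs2 : 0 < s2) (hν : 0 < ν) :
    Integrable (tPDF μ s2 ν) := by
  have hc : (0:ℝ) < Real.sqrt (ν * s2) := Real.sqrt_pos.2 (by positivity)
  have base : Integrable (fun y : ℝ => (1 + y ^ 2) ^ (-((ν + 1) / 2))) :=
    integrable_one_add_sq (by linarith)
  have h1 : Integrable (fun y : ℝ => (1 + (y / Real.sqrt (ν * s2)) ^ 2) ^ (-((ν + 1) / 2))) :=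
    base.comp_div hc.ne'
  have h2 : Integrable
      (fun x : ℝ => (1 + ((x - μ) / Real.sqrt (ν * s2)) ^ 2) ^ (-((ν + 1) / 2))) :=
    h1.comp_sub_right μ
  have := h2.const_mul
    (Real.Gamma ((ν + 1) / 2) / (Real.sqrt s2 * Real.sqrt (ν * Real.pi) * Real.Gamma (ν / 2)))
  refine this.congr ?_
  filter_upwards with x
  rw [tPDF_eq μ s2 ν hs2 hν x]

lemma integral_tPDF (μ s2 ν : ℝ) (hs2 : 0 < s2) (hν : 0 < ν) :
    ∫ x : ℝ, tPDF μ s2 ν x = 1 := by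
  have hc : (0:ℝ) < Real.sqrt (ν * s2) := Real.sqrt_pos.2 (by positivity)
  have e : ∫ x : ℝ, tPDF μ s2 ν x =
      Real.Gamma ((ν + 1) / 2) / (Real.sqrt s2 * Real.sqrt (ν * Real.pi) * Real.Gamma (ν / 2)) *
        ∫ x : ℝ, (1 + ((x - μ) / Real.sqrt (ν * s2)) ^ 2) ^ (-((ν + 1) / 2)) := by
    rw [← integral_const_mul]
    exact integral_congr_ae (Filter.Eventually.of_forall fun x => tPDF_eq μ s2 ν hs2 hν x)
  rw [e]
  have e2 : ∫ x : ℝ, (1 + ((x - μ) / Real.sqrt (ν * s2)) ^ 2) ^ (-((ν + 1) / 2))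
      = ∫ y : ℝ, (1 + (y / Real.sqrt (ν * s2)) ^ 2) ^ (-((ν + 1) / 2)) :=
    integral_sub_right_eq_self (fun y : ℝ => (1 + (y / Real.sqrt (ν * s2)) ^ 2) ^ (-((ν + 1) / 2))) μ
  rw [e2, MeasureTheory.Measure.integral_comp_div
    (fun y : ℝ => (1 + y ^ 2) ^ (-((ν + 1) / 2))) (Real.sqrt (ν * s2))]
  rw [integral_one_add_sq (show 1/2 < (ν+1)/2 by linarith)]
  have hΓ1 : 0 < Real.Gamma ((ν + 1) / 2) := Real.Gamma_pos_of_pos (by linarith)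
  have hΓ2 : 0 < Real.Gamma (ν / 2) := Real.Gamma_pos_of_pos (by linarith)
  have hs : Real.sqrt (ν * s2) = Real.sqrt ν * Real.sqrt s2 := Real.sqrt_mul hν.le s2
  have hp : Real.sqrt (ν * Real.pi) = Real.sqrt ν * Real.sqrt Real.pi :=
    Real.sqrt_mul hν.le Real.pi
  have hsa : abs (Real.sqrt (ν * s2)) = Real.sqrt (ν * s2) := abs_of_pos hc
  have hnu2 : (ν + 1) / 2 - 1 / 2 = ν / 2 := by ring
  rw [smul_eq_mul, hsa, hnu2, hs, hp]
  have h1 : (0:ℝ) < Real.sqrt ν := Real.sqrt_pos.2 hν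
  have h2 : (0:ℝ) < Real.sqrt s2 := Real.sqrt_pos.2 hs2
  have h3 : (0:ℝ) < Real.sqrt Real.pi := Real.sqrt_pos.2 Real.pi_pos
  field_simp


lemma tCDF_nonneg (ν : ℝ) (hν : 0 < ν) (x : ℝ) : 0 ≤ tCDF ν x :=
  setIntegral_nonneg measurableSet_Iic fun t _ => tPDF_nonneg 0 1 ν one_pos hν t

lemma tCDF_le_one (ν : ℝ) (hν : 0 < ν) (x : ℝ) : tCDF ν x ≤ 1 := by
  have h := setIntegral_le_integral (μ := volume) (s := Set.Iic x)
    (integrable_tPDF 0 1 ν one_pos hν)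
    (Filter.Eventually.of_forall fun t => tPDF_nonneg 0 1 ν one_pos hν t)
  rw [integral_tPDF 0 1 ν one_pos hν] at h
  exact h

lemma tCDF_monotone (ν : ℝ) (hν : 0 < ν) : Monotone (tCDF ν) := fun x y hxy =>
  setIntegral_mono_set (integrable_tPDF 0 1 ν one_pos hν).integrableOn
    (Filter.Eventually.of_forall fun t => tPDF_nonneg 0 1 ν one_pos hν t)
    (HasSubset.Subset.eventuallyLE (Iic_subset_Iic.2 hxy))

lemma tCDF_neg (ν : ℝ) (hν : 0 < ν) (x : ℝ) : tCDF ν (-x) = 1 - tCDF ν x := by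
  have hint := integrable_tPDF 0 1 ν one_pos hν
  have heven : ∀ t : ℝ, tPDF 0 1 ν (-t) = tPDF 0 1 ν t := by
    intro t; unfold tPDF; rw [sub_zero, sub_zero, neg_pow]; ring_nf
  have h1 : tCDF ν (-x) = ∫ t in Ioi x, tPDF 0 1 ν t := by
    rw [tCDF]
    have e : ∫ t in Iic (-x), tPDF 0 1 ν t = ∫ t in Iic (-x), tPDF 0 1 ν (-t) :=
      setIntegral_congr_fun measurableSet_Iic fun t _ => (heven t).symm
    rw [e, integral_comp_neg_Iic (-x) (tPDF 0 1 ν), neg_neg]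
  have h2 : tCDF ν x + ∫ t in Ioi x, tPDF 0 1 ν t = 1 := by
    have := integral_add_compl (measurableSet_Iic (a := x)) hint (f := tPDF 0 1 ν)
    rw [compl_Iic] at this
    rw [tCDF, this, integral_tPDF 0 1 ν one_pos hν]
  rw [h1]; linarith

/-- the univariate skew t density integrates to one. -/
theorem stmt_11 (μ σ δ ν : ℝ) (hσ : 0 < σ) (hν : 0 < ν) :
    ∫ z : ℝ, stPDF μ σ δ ν z = 1 := by
  have hs2 : (0:ℝ) < σ ^ 2 + δ ^ 2 := by positivity
  have hν1 : (0:ℝ) < ν + 1 := by linarith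
  set f : ℝ → ℝ := fun z => tPDF μ (σ ^ 2 + δ ^ 2) ν z with hf
  set w : ℝ → ℝ := fun z =>
    (z - μ) * δ / σ * Real.sqrt ((ν + 1) / (ν * (σ ^ 2 + δ ^ 2) + (z - μ) ^ 2)) with hw
  have hwm : Measurable w := by
    rw [hw]; fun_prop
  have hGmeas : Measurable (tCDF (ν + 1)) := (tCDF_monotone (ν + 1) hν1).measurable
  have hf_int : Integrable f := integrable_tPDF μ (σ ^ 2 + δ ^ 2) ν hs2 hν
  have hf_nonneg : ∀ z, 0 ≤ f z := fun z => tPDF_nonneg μ (σ ^ 2 + δ ^ 2) ν hs2 hν z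
  have hst : ∀ z, stPDF μ σ δ ν z = 2 * f z * tCDF (ν + 1) (w z) := fun z => rfl
  have hint : Integrable (fun z => stPDF μ σ δ ν z) := by
    apply Integrable.mono' (g := fun z => 2 * f z) (hf_int.const_mul 2)
    · apply Measurable.aestronglyMeasurable
      simp only [stPDF]
      exact (((measurable_tPDF _ _ _).const_mul 2).mul (hGmeas.comp hwm))
    · refine Filter.Eventually.of_forall fun z => ?_
      rw [hst z, Real.norm_eq_abs, abs_mul, abs_of_nonneg (by have := hf_nonneg z; positivity : (0:ℝ) ≤ 2 * f z),
        abs_of_nonneg (tCDF_nonneg (ν + 1) hν1 _)]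
      nlinarith [tCDF_le_one (ν + 1) hν1 (w z), hf_nonneg z, tCDF_nonneg (ν + 1) hν1 (w z)]
  have refl1 : ∀ z, stPDF μ σ δ ν (2 * μ - z) = 2 * f z * (1 - tCDF (ν + 1) (w z)) := by
    intro z
    have e0 : (2 * μ - z - μ) ^ 2 = (z - μ) ^ 2 := by ring
    have e1 : tPDF μ (σ ^ 2 + δ ^ 2) ν (2 * μ - z) = f z := by
      rw [hf]; unfold tPDF; rw [e0]
    have e2 : (2 * μ - z - μ) * δ / σ *
        Real.sqrt ((ν + 1) / (ν * (σ ^ 2 + δ ^ 2) + (2 * μ - z - μ) ^ 2)) = -w z := by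
      rw [hw, e0]; ring
    rw [stPDF, e1, e2, tCDF_neg (ν + 1) hν1 (w z)]
  have key : ∫ z : ℝ, stPDF μ σ δ ν (2 * μ - z) = ∫ z : ℝ, stPDF μ σ δ ν z := by
    calc ∫ z : ℝ, stPDF μ σ δ ν (2 * μ - z)
        = ∫ z : ℝ, stPDF μ σ δ ν (-(z - 2 * μ)) := by
          simp_rw [show ∀ z : ℝ, 2 * μ - z = -(z - 2 * μ) from fun z => by ring]
      _ = ∫ y : ℝ, stPDF μ σ δ ν (-y) :=
          integral_sub_right_eq_self (fun y => stPDF μ σ δ ν (-y)) (2 * μ)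
      _ = ∫ y : ℝ, stPDF μ σ δ ν y := integral_neg_eq_self _ _
  have expand : ∫ z : ℝ, stPDF μ σ δ ν (2 * μ - z)
      = (∫ z : ℝ, 2 * f z) - ∫ z : ℝ, stPDF μ σ δ ν z := by
    simp_rw [refl1, hst]
    rw [← integral_sub (hf_int.const_mul 2) ?_]
    · congr 1; funext z; ring
    · have := hint; simpa [hst] using this
  have htot : ∫ z : ℝ, 2 * f z = 2 := by
    rw [integral_const_mul, hf, integral_tPDF μ (σ ^ 2 + δ ^ 2) ν hs2 hν, mul_one]
  rw [htot] at expand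
  linarith [key, expand]
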